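/- Let K be a closed convex cone in a finite-dimensional Euclidean space E that is facially dual complete (i.e., K* + F^⊥ is closed for every proper face F of K). Then for every proper face F of K and every point x ∈ F, the tangent cone to K at x intersected with the linear span of F equals the tangent cone to F at x: T(x;K) ∩ span(F) = T(x;F). -/

import Mathlib

/- Common definitions following "Facially Dual Complete (Nice) cones and
lexicographic tangents" by V. Roshchina and L. Tunçel. -/

open Set Filter
open scoped Pointwise

local notation "⟪" x ", " y "⟫" => @inner ℝ _ _ x y

variable {E : Type*} [NormedAddCommGroup E] [InnerProductSpace ℝ E]

/-- The tangent cone to a set `C` at `x`: the closure of the cone of feasible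
directions `{d : x + ε • d ∈ C for some ε > 0}`. -/
def TangCone (x : E) (C : Set E) : Set E :=
  closure {d : E | ∃ ε : ℝ, 0 < ε ∧ x + ε • d ∈ C}

/-- `F` is a face of the convex set `C`: a closed convex subset such that any open
segment of `C` whose interior meets `F` has both endpoints in `F`. -/
def IsFaceOf (F C : Set E) : Prop :=
  F ⊆ C ∧ Convex ℝ F ∧ IsClosed F ∧
    ∀ x ∈ F, ∀ y ∈ C, ∀ z ∈ C, x ∈ openSegment ℝ y z → y ∈ F ∧ z ∈ F

/-- A proper face: a nonempty face different from the whole set. -/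
def IsProperFaceOf (F C : Set E) : Prop := IsFaceOf F C ∧ F.Nonempty ∧ F ≠ C

/-- The dual cone `K* = {s : ⟨s,x⟩ ≥ 0 for all x ∈ K}`. -/
def DualCone' (K : Set E) : Set E := {s : E | ∀ x ∈ K, 0 ≤ ⟪s, x⟫}

/-- `F^⊥ = {s : ⟨s,x⟩ = 0 for all x ∈ F}`. -/
def PerpOf (F : Set E) : Set E := {s : E | ∀ x ∈ F, ⟪s, x⟫ = 0}

/-- Facial dual completeness: `K* + F^⊥` is closed for every proper face `F` of `K`. -/
def IsFDC (K : Set E) : Prop :=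
  ∀ F : Set E, IsProperFaceOf F K → IsClosed (DualCone' K + PerpOf F)

/-- Tangential exposure: `T(x;C) ∩ span F = T(x;F)` for every proper face `F` and `x ∈ F`. -/
def TangentiallyExposed (C : Set E) : Prop :=
  ∀ F : Set E, IsProperFaceOf F C → ∀ x ∈ F,
    TangCone x C ∩ (Submodule.span ℝ F : Set E) = TangCone x F

/-- The family of all tangent cones of members of a family of sets. -/
def TangFamily (𝒦 : Set (Set E)) : Set (Set E) :=
  {T | ∃ C ∈ 𝒦, ∃ x ∈ C, T = TangCone x C}

/-- `𝒯^k(C)`: the `k`-fold iterated tangent-cone families of `C`;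
its members are the lexicographic tangent cones (of order `k`) of `C`. -/
def TangIter (C : Set E) : ℕ → Set (Set E)
  | 0 => {C}
  | k + 1 => TangFamily (TangIter C k)

/-- Strong tangential exposure: `C` and all of its lexicographic tangent cones are
tangentially exposed. -/
def StronglyTangentiallyExposed (C : Set E) : Prop :=
  ∀ k : ℕ, ∀ T ∈ TangIter C k, TangentiallyExposed T

/-- `F` is an exposed face of `C`: the set of maximizers over `C` of some linear functional. -/
def IsExposedFaceOf (F C : Set E) : Prop :=
  ∃ p : E, F = {x ∈ C | ∀ y ∈ C, ⟪p, y⟫ ≤ ⟪p, x⟫}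

/-- `C` is facially exposed: every proper face of `C` is exposed. -/
def FaciallyExposed (C : Set E) : Prop :=
  ∀ F : Set E, IsProperFaceOf F C → IsExposedFaceOf F C

/-- The normal cone to `C` at `x`. -/
def NormalCone' (x : E) (C : Set E) : Set E := {s : E | ∀ y ∈ C, ⟪s, y - x⟫ ≤ 0}

/-- The minimal face of `C` containing `S`. -/
def MinimalFace (S C : Set E) : Set E := ⋂₀ {F : Set E | IsFaceOf F C ∧ S ⊆ F}

/-- `K` is a cone: closed under positive scalar multiplication. -/
def IsConeSet (K : Set E) : Prop := ∀ c : ℝ, 0 < c → ∀ x ∈ K, c • x ∈ K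

/-! ### Auxiliary lemmas for the proof -/

section Aux

variable {E : Type*} [NormedAddCommGroup E] [InnerProductSpace ℝ E]

lemma dualCone'_closure_aux (S : Set E) : DualCone' (closure S) = DualCone' S := by
  ext s
  constructor
  · exact fun h x hx => h x (subset_closure hx)
  · intro h x hx
    have hcl : closure S ⊆ {d : E | 0 ≤ ⟪s, d⟫} :=
      closure_minimal h (isClosed_le continuous_const (continuous_const.inner continuous_id))
    exact hcl hx

lemma dualCone'_eq_innerDualCone_aux [CompleteSpace E] (S : Set E) :
    DualCone' S = (ProperCone.innerDual S : Set E) := by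
  ext s
  simp only [DualCone', Set.mem_setOf_eq, SetLike.mem_coe, ProperCone.mem_innerDual]
  constructor
  · intro h x hx; rw [real_inner_comm]; exact h x hx
  · intro h x hx; rw [real_inner_comm]; exact h hx

lemma cone_add_mem_aux {S : Set E} (hconv : Convex ℝ S) (hcone : IsConeSet S) :
    ∀ x ∈ S, ∀ y ∈ S, x + y ∈ S := by
  intro x hx y hy
  have hmid : (2:ℝ)⁻¹ • x + (2:ℝ)⁻¹ • y ∈ S :=
    hconv hx hy (by norm_num) (by norm_num) (by norm_num)
  have h2 := hcone 2 (by norm_num) _ hmid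
  have : (2:ℝ) • ((2:ℝ)⁻¹ • x + (2:ℝ)⁻¹ • y) = x + y := by
    rw [smul_add, smul_smul, smul_smul]
    norm_num
  rwa [this] at h2

/-- Package a convex cone set as a `ConvexCone`. -/
def toConvexConeAux (S : Set E) (hconv : Convex ℝ S) (hcone : IsConeSet S) : ConvexCone ℝ E where
  carrier := S
  smul_mem' := fun {c} hc {x} hx => hcone c hc x hx
  add_mem' := fun {x} hx {y} hy => cone_add_mem_aux hconv hcone x hx y hy

lemma zero_mem_aux {S : Set E} (hne : S.Nonempty) (hclosed : IsClosed S)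
    (hconv : Convex ℝ S) (hcone : IsConeSet S) : (0:E) ∈ S := by
  have hCS : ((toConvexConeAux S hconv hcone : ConvexCone ℝ E) : Set E) = S := by rfl
  have h := ConvexCone.Pointed.of_nonempty_of_isClosed (C := toConvexConeAux S hconv hcone)
    (by rw [hCS]; exact hne) (by rw [hCS]; exact hclosed)
  rw [← hCS]
  exact h

/-- The bipolar theorem for convex cone sets. -/
lemma bipolar_aux [CompleteSpace E] {S : Set E} (hne : S.Nonempty)
    (hconv : Convex ℝ S) (hcone : IsConeSet S) :
    DualCone' (DualCone' S) = closure S := by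
  let C : ConvexCone ℝ E := toConvexConeAux S hconv hcone
  have hCS : (C : Set E) = S := by rfl
  have hCcl : (C.closure : Set E) = closure S := by rw [ConvexCone.coe_closure, hCS]
  have hpt : C.closure.Pointed := ConvexCone.Pointed.of_nonempty_of_isClosed
    (by rw [hCcl]; exact hne.closure) (by rw [hCcl]; exact isClosed_closure)
  let P : ProperCone ℝ E :=
    { toSubmodule := C.closure.toPointedCone hpt,
      isClosed' := by rw [← hCcl] at *; exact isClosed_closure }
  have hP : (P : Set E) = closure S := by rw [← hCcl]; rfl
  calc DualCone' (DualCone' S)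
      = DualCone' (DualCone' (closure S)) := by rw [dualCone'_closure_aux]
    _ = closure S := by
        rw [← hP, dualCone'_eq_innerDualCone_aux (P : Set E), dualCone'_eq_innerDualCone_aux,
          ProperCone.innerDual_innerDual]

lemma feas_mem_iff_aux {C : Set E} (hcone : IsConeSet C) {x d : E} :
    (∃ ε : ℝ, 0 < ε ∧ x + ε • d ∈ C) ↔ ∃ y ∈ C, ∃ t : ℝ, 0 < t ∧ d = y - t • x := by
  constructor
  · rintro ⟨ε, hε, h⟩
    refine ⟨ε⁻¹ • (x + ε • d), hcone _ (by positivity) _ h, ε⁻¹, by positivity, ?_⟩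
    rw [smul_add, smul_smul, inv_mul_cancel₀ hε.ne', one_smul]
    abel
  · rintro ⟨y, hy, t, ht, rfl⟩
    refine ⟨t⁻¹, by positivity, ?_⟩
    have h : x + t⁻¹ • (y - t • x) = t⁻¹ • y := by
      rw [smul_sub, smul_smul, inv_mul_cancel₀ ht.ne', one_smul]
      abel
    rw [h]
    exact hcone _ (by positivity) _ hy

lemma feas_convex_aux {C : Set E} (hconv : Convex ℝ C) (hcone : IsConeSet C) (x : E) :
    Convex ℝ {d : E | ∃ ε : ℝ, 0 < ε ∧ x + ε • d ∈ C} := by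
  intro d1 h1 d2 h2 a b ha hb hab
  obtain ⟨y1, hy1, t1, ht1, rfl⟩ := (feas_mem_iff_aux hcone).mp h1
  obtain ⟨y2, hy2, t2, ht2, rfl⟩ := (feas_mem_iff_aux hcone).mp h2
  refine (feas_mem_iff_aux hcone).mpr
    ⟨a • y1 + b • y2, hconv hy1 hy2 ha hb hab, a * t1 + b * t2, ?_, ?_⟩
  · rcases eq_or_lt_of_le ha with h | h
    · have hb1 : b = 1 := by linarith
      rw [← h, hb1]
      simpa using ht2
    · have hp1 : 0 < a * t1 := mul_pos h ht1
      have hp2 : 0 ≤ b * t2 := mul_nonneg hb ht2.le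
      linarith
  · rw [smul_sub, smul_sub, smul_smul, smul_smul, add_smul]
    abel

lemma feas_cone_aux {C : Set E} (hcone : IsConeSet C) (x : E) :
    IsConeSet {d : E | ∃ ε : ℝ, 0 < ε ∧ x + ε • d ∈ C} := by
  intro c hc d hd
  obtain ⟨y, hy, t, ht, rfl⟩ := (feas_mem_iff_aux hcone).mp hd
  exact (feas_mem_iff_aux hcone).mpr
    ⟨c • y, hcone c hc y hy, c * t, mul_pos hc ht, by rw [smul_sub, smul_smul]⟩

lemma dualCone'_tangCone_aux {C : Set E} (hcone : IsConeSet C) {x : E} (hx : x ∈ C) {s : E} :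
    s ∈ DualCone' (TangCone x C) ↔ s ∈ DualCone' C ∧ ⟪s, x⟫ = 0 := by
  rw [TangCone, dualCone'_closure_aux]
  constructor
  · intro h
    have hxm : ∀ t : ℝ, 0 < t → (0:ℝ) ≤ ⟪s, x - t • x⟫ := fun t ht =>
      h _ ((feas_mem_iff_aux hcone).mpr ⟨x, hx, t, ht, rfl⟩)
    have e : ∀ t : ℝ, ⟪s, x - t • x⟫ = (1 - t) * ⟪s, x⟫ := by
      intro t; rw [inner_sub_right, real_inner_smul_right]; ring
    have h1 := hxm 2 (by norm_num)
    have h2 := hxm (1/2) (by norm_num)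
    rw [e] at h1 h2
    have hx0 : ⟪s, x⟫ = 0 := by nlinarith
    refine ⟨fun y hy => ?_, hx0⟩
    have h3 := h _ ((feas_mem_iff_aux hcone).mpr ⟨y, hy, 1, one_pos, rfl⟩)
    rwa [inner_sub_right, one_smul, hx0, sub_zero] at h3
  · rintro ⟨hs, hx0⟩ d hd
    obtain ⟨y, hy, t, ht, rfl⟩ := (feas_mem_iff_aux hcone).mp hd
    rw [inner_sub_right, real_inner_smul_right, hx0, mul_zero, sub_zero]
    exact hs y hy

lemma dualCone'_cone_aux (S : Set E) : IsConeSet (DualCone' S) := by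
  intro c hc s hs y hy
  rw [real_inner_smul_left]
  exact mul_nonneg hc.le (hs y hy)

lemma dualCone'_convex_aux [CompleteSpace E] (S : Set E) : Convex ℝ (DualCone' S) := by
  rw [dualCone'_eq_innerDualCone_aux]
  exact (ProperCone.innerDual S).convex

lemma perp_convex_aux (F : Set E) : Convex ℝ (PerpOf F) := by
  intro s1 h1 s2 h2 a b _ _ _
  intro y hy
  rw [inner_add_left, real_inner_smul_left, real_inner_smul_left, h1 y hy, h2 y hy]
  ring

lemma perp_cone_aux (F : Set E) : IsConeSet (PerpOf F) := by
  intro c _ s hs y hy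
  rw [real_inner_smul_left, hs y hy, mul_zero]

lemma zero_mem_dualCone'_aux (S : Set E) : (0:E) ∈ DualCone' S := by
  intro y hy
  rw [inner_zero_left]

lemma zero_mem_perp_aux (F : Set E) : (0:E) ∈ PerpOf F := by
  intro y hy
  exact inner_zero_left y

lemma cone_add_aux {A B : Set E} (hA : IsConeSet A) (hB : IsConeSet B) : IsConeSet (A + B) := by
  intro c hc z hz
  obtain ⟨a, ha, b, hb, rfl⟩ := Set.mem_add.mp hz
  rw [smul_add]
  exact Set.add_mem_add (hA c hc a ha) (hB c hc b hb)

lemma dualCone'_add_aux {A B : Set E} (h0A : (0:E) ∈ A) (h0B : (0:E) ∈ B) :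
    DualCone' (A + B) = DualCone' A ∩ DualCone' B := by
  ext s
  constructor
  · intro h
    constructor
    · intro a ha
      have := h (a + 0) (Set.add_mem_add ha h0B)
      simpa using this
    · intro b hb
      have := h (0 + b) (Set.add_mem_add h0A hb)
      simpa using this
  · rintro ⟨hA, hB⟩ z hz
    obtain ⟨a, ha, b, hb, rfl⟩ := Set.mem_add.mp hz
    rw [inner_add_right]
    exact add_nonneg (hA a ha) (hB b hb)

lemma perp_eq_aux (F : Set E) : PerpOf F = ((Submodule.span ℝ F)ᗮ : Set E) := by
  ext s
  simp only [PerpOf, Set.mem_setOf_eq, SetLike.mem_coe, Submodule.mem_orthogonal]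
  constructor
  · intro h u hu
    induction hu using Submodule.span_induction with
    | mem y hy => rw [real_inner_comm]; exact h y hy
    | zero => exact inner_zero_left s
    | add y z hy hz ihy ihz => rw [inner_add_left, ihy, ihz, add_zero]
    | smul r y hy ih => rw [real_inner_smul_left, ih, mul_zero]
  · intro h y hy
    rw [real_inner_comm]
    exact h y (Submodule.subset_span hy)

lemma dualCone'_perp_aux [FiniteDimensional ℝ E] (F : Set E) :
    DualCone' (PerpOf F) = (Submodule.span ℝ F : Set E) := by
  rw [perp_eq_aux]
  ext s
  constructor
  · intro h
    have h0 : ∀ b ∈ (Submodule.span ℝ F)ᗮ, ⟪s, b⟫ = 0 := by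
      intro b hb
      have h1 := h b hb
      have h2 := h (-b) (Submodule.neg_mem _ hb)
      rw [inner_neg_right] at h2
      linarith
    have hmem : s ∈ ((Submodule.span ℝ F)ᗮ)ᗮ := by
      rw [Submodule.mem_orthogonal]
      intro u hu
      rw [real_inner_comm]
      exact h0 u hu
    rwa [Submodule.orthogonal_orthogonal] at hmem
  · intro hs b hb
    rw [SetLike.mem_coe, Submodule.mem_orthogonal] at hb
    exact le_of_eq (hb s hs).symm

lemma face_zero_aux {K F : Set E} (hKclosed : IsClosed K) (hKconv : Convex ℝ K)
    (hKcone : IsConeSet K) (hF : IsProperFaceOf F K) : (0:E) ∈ F := by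
  obtain ⟨⟨hFK, hFconv, hFclosed, hface⟩, ⟨a, ha⟩, _⟩ := hF
  have h0K : (0:E) ∈ K := zero_mem_aux ⟨a, hFK ha⟩ hKclosed hKconv hKcone
  have h2a : (2:ℝ) • a ∈ K := hKcone 2 (by norm_num) a (hFK ha)
  have hseg : a ∈ openSegment ℝ (0:E) ((2:ℝ) • a) := by
    refine ⟨1/2, 1/2, by norm_num, by norm_num, by norm_num, ?_⟩
    rw [smul_zero, zero_add, smul_smul]
    norm_num
  exact (hface a ha 0 h0K _ h2a hseg).1

lemma face_cone_aux {K F : Set E} (hKcone : IsConeSet K) (h0K : (0:E) ∈ K) (h0F : (0:E) ∈ F)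
    (hF : IsFaceOf F K) : IsConeSet F := by
  obtain ⟨hFK, hFconv, hFclosed, hface⟩ := hF
  intro c hc y hy
  rcases le_or_gt c 1 with h | h
  · have hmem := hFconv hy h0F hc.le (by linarith : (0:ℝ) ≤ 1 - c) (by ring)
    simpa using hmem
  · have hc0 : c ≠ 0 := by positivity
    have hcy : c • y ∈ K := hKcone c hc y (hFK hy)
    have hseg : y ∈ openSegment ℝ (0:E) (c • y) := by
      refine ⟨1 - 1/c, 1/c, ?_, by positivity, by ring, ?_⟩
      · have : 1/c < 1 := by
          rw [div_lt_one hc]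
          exact h
        linarith
      · rw [smul_zero, zero_add, smul_smul, one_div, inv_mul_cancel₀ hc0, one_smul]
    exact (hface y hy 0 h0K (c • y) hcy hseg).2

lemma span_sub_aux {F : Set E} (h0F : (0:E) ∈ F) (hFconv : Convex ℝ F) (hFcone : IsConeSet F) :
    (Submodule.span ℝ F : Set E) ⊆ {y : E | ∃ a ∈ F, ∃ b ∈ F, y = a - b} := by
  intro y hy
  rw [SetLike.mem_coe] at hy
  induction hy using Submodule.span_induction with
  | mem z hz => exact ⟨z, hz, 0, h0F, by simp⟩
  | zero => exact ⟨0, h0F, 0, h0F, by simp⟩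
  | add z w hz hw ihz ihw =>
      obtain ⟨a, ha, b, hb, rfl⟩ := ihz
      obtain ⟨c, hc, d, hd, rfl⟩ := ihw
      exact ⟨a + c, cone_add_mem_aux hFconv hFcone a ha c hc,
        b + d, cone_add_mem_aux hFconv hFcone b hb d hd, by abel⟩
  | smul r z hz ih =>
      obtain ⟨a, ha, b, hb, rfl⟩ := ih
      rcases lt_trichotomy r 0 with h | h | h
      · refine ⟨(-r) • b, hFcone _ (by linarith) _ hb, (-r) • a, hFcone _ (by linarith) _ ha, ?_⟩
        rw [smul_sub, neg_smul, neg_smul, sub_neg_eq_add]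
        abel
      · exact ⟨0, h0F, 0, h0F, by simp [h]⟩
      · exact ⟨r • a, hFcone r h a ha, r • b, hFcone r h b hb, by rw [smul_sub]⟩

lemma face_eq_inter_aux {K F : Set E} (hF : IsFaceOf F K) (h0F : (0:E) ∈ F)
    (hFcone : IsConeSet F) : K ∩ (Submodule.span ℝ F : Set E) = F := by
  obtain ⟨hFK, hFconv, hFclosed, hface⟩ := hF
  apply Set.Subset.antisymm
  · rintro y ⟨hyK, hy⟩
    obtain ⟨a, ha, b, hb, hy_eq⟩ := span_sub_aux h0F hFconv hFcone hy
    subst hy_eq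
    have hab : a + b ∈ F := cone_add_mem_aux hFconv hFcone a ha b hb
    have hseg : a ∈ openSegment ℝ (a - b) (a + b) := by
      refine ⟨1/2, 1/2, by norm_num, by norm_num, by norm_num, ?_⟩
      module
    exact (hface a ha (a - b) hyK (a + b) (hFK hab) hseg).1
  · exact fun y hy => ⟨hFK hy, Submodule.subset_span hy⟩

end Aux

/-- **Theorem (necessary condition).** If a closed convex cone `K` in a finite-dimensional
Euclidean space is facially dual complete, then for every proper face `F` of `K` and every
`x ∈ F`, `T(x;K) ∩ span F = T(x;F)`. -/
theorem FDC_implies_tangentially_exposed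
    {E : Type*} [NormedAddCommGroup E] [InnerProductSpace ℝ E] [FiniteDimensional ℝ E]
    (K : Set E) (hKclosed : IsClosed K) (hKconv : Convex ℝ K) (hKcone : IsConeSet K)
    (hFDC : IsFDC K) :
    ∀ F : Set E, IsProperFaceOf F K → ∀ x ∈ F,
      TangCone x K ∩ (Submodule.span ℝ F : Set E) = TangCone x F := by
  haveI : CompleteSpace E := FiniteDimensional.complete ℝ E
  intro F hF x hx
  obtain ⟨hFface, hFne, hFneq⟩ := id hF
  obtain ⟨hFK, hFconv, hFclosed, hface⟩ := id hFface
  have h0F : (0:E) ∈ F := face_zero_aux hKclosed hKconv hKcone hF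
  have h0K : (0:E) ∈ K := hFK h0F
  have hFcone : IsConeSet F := face_cone_aux hKcone h0K h0F hFface
  apply Set.Subset.antisymm
  · -- hard direction: T(x;K) ∩ span F ⊆ T(x;F)
    rintro d ⟨hdK, hdspan⟩
    -- dual description of the sum K* + F^⊥
    have h0dual : (0:E) ∈ DualCone' K := zero_mem_dualCone'_aux K
    have h0P : (0:E) ∈ PerpOf F := zero_mem_perp_aux F
    have hKcl : DualCone' (DualCone' K) = K := by
      rw [bipolar_aux ⟨x, hFK hx⟩ hKconv hKcone, hKclosed.closure_eq]
    have hdual_sum : DualCone' (DualCone' K + PerpOf F) = F := by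
      rw [dualCone'_add_aux h0dual h0P, hKcl, dualCone'_perp_aux]
      exact face_eq_inter_aux hFface h0F hFcone
    have hsum_ne : (DualCone' K + PerpOf F).Nonempty :=
      ⟨0 + 0, Set.add_mem_add h0dual h0P⟩
    have hsum_conv : Convex ℝ (DualCone' K + PerpOf F) :=
      (dualCone'_convex_aux K).add (perp_convex_aux F)
    have hsum_cone : IsConeSet (DualCone' K + PerpOf F) :=
      cone_add_aux (dualCone'_cone_aux K) (perp_cone_aux F)
    have hFstar : DualCone' F = DualCone' K + PerpOf F := by
      have hdd := bipolar_aux hsum_ne hsum_conv hsum_cone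
      rw [hdual_sum, (hFDC F hF).closure_eq] at hdd
      exact hdd
    -- d belongs to the bipolar of the feasible directions set of F at x
    have hfeas_ne : ({d : E | ∃ ε : ℝ, 0 < ε ∧ x + ε • d ∈ F}).Nonempty :=
      ⟨0, 1, one_pos, by simpa using hx⟩
    have hTF : TangCone x F =
        DualCone' (DualCone' {d : E | ∃ ε : ℝ, 0 < ε ∧ x + ε • d ∈ F}) := by
      rw [TangCone, bipolar_aux hfeas_ne (feas_convex_aux hFconv hFcone x) (feas_cone_aux hFcone x)]
    rw [hTF]
    intro s hs
    rw [real_inner_comm]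
    have hs' : s ∈ DualCone' (TangCone x F) := by
      rw [TangCone, dualCone'_closure_aux]
      exact hs
    obtain ⟨hsF, hsx⟩ := (dualCone'_tangCone_aux hFcone hx).mp hs'
    rw [hFstar] at hsF
    obtain ⟨u, hu, v, hv, rfl⟩ := Set.mem_add.mp hsF
    have hvx : ⟪v, x⟫ = 0 := hv x hx
    have hux : ⟪u, x⟫ = 0 := by
      rw [inner_add_left, hvx, add_zero] at hsx
      exact hsx
    have hud : (0:ℝ) ≤ ⟪u, d⟫ := by
      have humem : u ∈ DualCone' (TangCone x K) :=
        (dualCone'_tangCone_aux hKcone (hFK hx)).mpr ⟨hu, hux⟩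
      exact humem d hdK
    have hvd : ⟪v, d⟫ = 0 := by
      rw [perp_eq_aux] at hv
      rw [SetLike.mem_coe, Submodule.mem_orthogonal'] at hv
      exact hv d hdspan
    rw [inner_add_left]
    linarith
  · -- easy direction: T(x;F) ⊆ T(x;K) ∩ span F
    intro d hd
    constructor
    · refine closure_mono ?_ hd
      rintro d' ⟨ε, hε, h⟩
      exact ⟨ε, hε, hFK h⟩
    · have hsub : {d : E | ∃ ε : ℝ, 0 < ε ∧ x + ε • d ∈ F} ⊆ (Submodule.span ℝ F : Set E) := by
        rintro d' ⟨ε, hε, h⟩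
        have hd' : d' = ε⁻¹ • ((x + ε • d') - x) := by
          rw [add_sub_cancel_left, smul_smul, inv_mul_cancel₀ hε.ne', one_smul]
        rw [hd']
        exact Submodule.smul_mem _ _ (Submodule.sub_mem _ (Submodule.subset_span h)
          (Submodule.subset_span hx))
      exact closure_minimal hsub (Submodule.span ℝ F).closed_of_finiteDimensional hd
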